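/- arXiv:2411.00152 — 3 statements merged into one kernel-verified Lean document; each statement's English description precedes it below -/
import Mathlib

section
/- Let a = 7/8, b = 4/5, μ = 7/30, δ > 0, E > 0. If E > E*ℓ(δ), then the Jacobian J(0, θ_Sℓ) of the desingularized flow satisfies trace(J(0, θ_Sℓ)) = −1 and det(J(0, θ_Sℓ)) = −2δ·√(R_δ² − μ²) < 0; hence J(0, θ_Sℓ) has two real eigenvalues of opposite sign (the folded singularity at θ_Sℓ is a folded saddle). Likewise, if E > E*r(δ), then trace(J(2, θ_Sr)) = −1 and det(J(2, θ_Sr)) = −2δ·√(R_δ² − G(2)²) < 0, so J(2, θ_Sr) has two real eigenvalues of opposite sign. -/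
open Real Set Matrix

lemma evec (B C lam : ℝ) (hC : C ≠ 0) (h : lam^2 + lam = B*C) :
    ∃ v : Fin 2 → ℝ, v ≠ 0 ∧ (!![(-1:ℝ), B; C, 0]).mulVec v = lam • v := by
  refine ⟨![lam, C], ?_, ?_⟩
  · intro hv
    have := congrFun hv 1
    simp at this
    exact hC this
  · funext i
    fin_cases i <;>
      simp [Matrix.mulVec, dotProduct, Fin.sum_univ_succ] <;> nlinarith

lemma eigs (B C : ℝ) (hC : C ≠ 0) (hBC : 0 < B * C) :
    ∃ lam₁ lam₂ : ℝ, lam₁ < 0 ∧ 0 < lam₂ ∧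
      (∃ v : Fin 2 → ℝ, v ≠ 0 ∧ (!![(-1:ℝ), B; C, 0]).mulVec v = lam₁ • v) ∧
      (∃ w : Fin 2 → ℝ, w ≠ 0 ∧ (!![(-1:ℝ), B; C, 0]).mulVec w = lam₂ • w) := by
  set s := Real.sqrt (1 + 4*(B*C)) with hs
  have hs2 : s^2 = 1 + 4*(B*C) := Real.sq_sqrt (by linarith)
  have hs1 : 1 < s := by
    nlinarith [Real.sqrt_nonneg (1 + 4*(B*C))]
  refine ⟨(-1-s)/2, (-1+s)/2, by linarith, by linarith, ?_, ?_⟩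
  · exact evec B C _ hC (by nlinarith)
  · exact evec B C _ hC (by nlinarith)

lemma sqrt_fact (R k : ℝ) (hR : 0 < R) (hk : k^2 ≤ R^2) :
    R * Real.sqrt (1 - (k/R)^2) = Real.sqrt (R^2 - k^2) := by
  have h1 : 1 - (k/R)^2 = (R^2 - k^2)/R^2 := by field_simp
  rw [h1, Real.sqrt_div (by linarith), Real.sqrt_sq hR.le]
  field_simp

/-- For `a = 7/8`, `b = 4/5`, `μ = 7/30`, `δ > 0`, `E > 0`:
if `E > E*ℓ(δ)`, the Jacobian `J(0, θ_Sℓ) = [[−G'(0), −R sin(θ_Sℓ − φ)], [2δ(0−1), 0]]`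
has trace `−1` and determinant `−2δ√(R² − μ²) < 0`, hence two real eigenvalues of
opposite sign; likewise if `E > E*r(δ)`, then `J(2, θ_Sr)` has trace `−1` and
determinant `−2δ√(R² − G(2)²) < 0` and two real eigenvalues of opposite sign. -/
theorem stmt_4 (a b μ δ E R φ : ℝ)
    (ha : a = 7/8) (hb : b = 4/5) (hμ : μ = 7/30)
    (hδ : 0 < δ) (hE : 0 < E)
    (hR : R = E * Real.sqrt (b^2 + δ^2))
    (hφ : φ = Real.arctan (b / δ)) :
    (E > μ / Real.sqrt (b^2 + δ^2) →
      let θSℓ := φ + Real.arccos (μ / R)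
      let J : Matrix (Fin 2) (Fin 2) ℝ :=
        !![-1, -(R * Real.sin (θSℓ - φ)); 2*δ*(0 - 1), 0]
      Matrix.trace J = -1 ∧
      J.det = -(2*δ*Real.sqrt (R^2 - μ^2)) ∧ J.det < 0 ∧
      ∃ lam₁ lam₂ : ℝ, lam₁ < 0 ∧ 0 < lam₂ ∧
        (∃ v : Fin 2 → ℝ, v ≠ 0 ∧ J.mulVec v = lam₁ • v) ∧
        (∃ w : Fin 2 → ℝ, w ≠ 0 ∧ J.mulVec w = lam₂ • w)) ∧
    (E > (7/6) / Real.sqrt (b^2 + δ^2) →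
      let θSr := if Real.arccos ((7/6) / R) ≤ φ then φ - Real.arccos ((7/6) / R)
                 else φ - Real.arccos ((7/6) / R) + 2*π
      let J : Matrix (Fin 2) (Fin 2) ℝ :=
        !![-1, -(R * Real.sin (θSr - φ)); 2*δ*(2 - 1), 0]
      Matrix.trace J = -1 ∧
      J.det = -(2*δ*Real.sqrt (R^2 - (7/6)^2)) ∧ J.det < 0 ∧
      ∃ lam₁ lam₂ : ℝ, lam₁ < 0 ∧ 0 < lam₂ ∧
        (∃ v : Fin 2 → ℝ, v ≠ 0 ∧ J.mulVec v = lam₁ • v) ∧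
        (∃ w : Fin 2 → ℝ, w ≠ 0 ∧ J.mulVec w = lam₂ • w)) := by
  have hsq : 0 < Real.sqrt (b^2 + δ^2) := Real.sqrt_pos.mpr (by nlinarith)
  have hRpos : 0 < R := by rw [hR]; positivity
  constructor
  · intro hEl θSℓ J
    have hμpos : (0:ℝ) < μ := by rw [hμ]; norm_num
    have hμR : μ < R := by
      rw [hR]; rw [gt_iff_lt, div_lt_iff₀ hsq] at hEl; linarith
    have hk2 : μ^2 ≤ R^2 := by nlinarith
    have hsp : 0 < Real.sqrt (R^2 - μ^2) := Real.sqrt_pos.mpr (by nlinarith)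
    have h1 : θSℓ - φ = Real.arccos (μ/R) := by simp only [θSℓ]; ring
    have h2 : R * Real.sin (θSℓ - φ) = Real.sqrt (R^2 - μ^2) := by
      rw [h1, Real.sin_arccos, sqrt_fact R μ hRpos hk2]
    refine ⟨by simp [J, Matrix.trace_fin_two_of], ?_, ?_, ?_⟩
    · simp only [J, Matrix.det_fin_two_of, h2]; ring
    · simp only [J, Matrix.det_fin_two_of, h2]; nlinarith
    · have := eigs (-(R * Real.sin (θSℓ - φ))) (2*δ*(0-1)) (by nlinarith)
        (by rw [h2]; nlinarith)
      exact this
  · intro hEr θSr J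
    have hμR : (7/6:ℝ) < R := by
      rw [hR]; rw [gt_iff_lt, div_lt_iff₀ hsq] at hEr; linarith
    have hk2 : (7/6:ℝ)^2 ≤ R^2 := by nlinarith
    have hsp : 0 < Real.sqrt (R^2 - (7/6)^2) := Real.sqrt_pos.mpr (by nlinarith)
    have h2 : R * Real.sin (θSr - φ) = -Real.sqrt (R^2 - (7/6)^2) := by
      have hsin : Real.sin (θSr - φ) = -Real.sin (Real.arccos ((7/6)/R)) := by
        simp only [θSr]; split_ifs
        · rw [show φ - Real.arccos ((7/6)/R) - φ = -(Real.arccos ((7/6)/R)) by ring,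
            Real.sin_neg]
        · rw [show φ - Real.arccos ((7/6)/R) + 2*π - φ = -(Real.arccos ((7/6)/R)) + 2*π by ring,
            Real.sin_add_two_pi, Real.sin_neg]
      rw [hsin, Real.sin_arccos, mul_neg, sqrt_fact R (7/6) hRpos hk2]
    refine ⟨by simp [J, Matrix.trace_fin_two_of], ?_, ?_, ?_⟩
    · simp only [J, Matrix.det_fin_two_of, h2]; ring
    · simp only [J, Matrix.det_fin_two_of, h2]; nlinarith
    · have := eigs (-(R * Real.sin (θSr - φ))) (2*δ*(2-1)) (by nlinarith)
        (by rw [h2]; nlinarith)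
      exact this
end

section
/- Let a = 7/8, b = 4/5, μ = 7/30, δ > 0, and E > E*ℓ(δ). Then the Jacobian J(0, θ_Nℓ) satisfies trace(J(0, θ_Nℓ)) = −1 < 0 and det(J(0, θ_Nℓ)) = 2δ·√(R_δ² − μ²) > 0, and its discriminant satisfies trace² − 4·det = 1 − 8δ·√(R_δ² − μ²). Moreover, 1 − 8δ·√(R_δ² − μ²) > 0 (folded node) if and only if E < E**ℓ(δ) := √( (E*ℓ(δ))² + 1/(64·δ²·(b² + δ²)) ), and 1 − 8δ·√(R_δ² − μ²) < 0 (folded focus) if and only if E > E**ℓ(δ). -/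
open Real Set Matrix

lemma aux_lt (S d x m : ℝ) (hS : 0 < S) (hd : 0 < d) :
    64*d^2*(x^2*S - m^2) < 1 ↔ x^2 < m^2/S + 1/(64*d^2*S) := by
  rw [div_add_div _ _ hS.ne' (by positivity), lt_div_iff₀ (by positivity)]
  constructor <;> intro h <;> nlinarith [mul_pos hS hS, mul_pos hd hd]

lemma aux_gt (S d x m : ℝ) (hS : 0 < S) (hd : 0 < d) :
    1 < 64*d^2*(x^2*S - m^2) ↔ m^2/S + 1/(64*d^2*S) < x^2 := by
  rw [div_add_div _ _ hS.ne' (by positivity), div_lt_iff₀ (by positivity)]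
  constructor <;> intro h <;> nlinarith [mul_pos hS hS, mul_pos hd hd]

lemma sq_lt_iff' (x y : ℝ) (hx : 0 ≤ x) (hy : 0 ≤ y) : x < y ↔ x^2 < y^2 := by
  constructor
  · intro h; nlinarith
  · intro h; nlinarith

/-- For `a = 7/8`, `b = 4/5`, `μ = 7/30`, `δ > 0`, `E > E*ℓ(δ)`:
the Jacobian `J(0, θ_Nℓ)` has trace `−1 < 0`, determinant `2δ√(R² − μ²) > 0`,
discriminant `trace² − 4 det = 1 − 8δ√(R² − μ²)`, and this is positive (folded
node) iff `E < E**ℓ(δ) = √((E*ℓ(δ))² + 1/(64δ²(b² + δ²)))`, and negative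
(folded focus) iff `E > E**ℓ(δ)`. -/
theorem stmt_5 (a b μ δ E R φ θNℓ : ℝ)
    (ha : a = 7/8) (hb : b = 4/5) (hμ : μ = 7/30)
    (hδ : 0 < δ) (hE : 0 < E)
    (hR : R = E * Real.sqrt (b^2 + δ^2))
    (hφ : φ = Real.arctan (b / δ))
    (hEℓ : E > μ / Real.sqrt (b^2 + δ^2))
    (hθN : θNℓ = if Real.arccos (μ / R) ≤ φ then φ - Real.arccos (μ / R)
                 else φ - Real.arccos (μ / R) + 2*π) :
    let J : Matrix (Fin 2) (Fin 2) ℝ :=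
      !![-1, -(R * Real.sin (θNℓ - φ)); 2*δ*(0 - 1), 0]
    Matrix.trace J = -1 ∧ Matrix.trace J < 0 ∧
    J.det = 2*δ*Real.sqrt (R^2 - μ^2) ∧ 0 < J.det ∧
    (Matrix.trace J)^2 - 4 * J.det = 1 - 8*δ*Real.sqrt (R^2 - μ^2) ∧
    (1 - 8*δ*Real.sqrt (R^2 - μ^2) > 0 ↔
      E < Real.sqrt ((μ / Real.sqrt (b^2 + δ^2))^2 + 1/(64*δ^2*(b^2 + δ^2)))) ∧
    (1 - 8*δ*Real.sqrt (R^2 - μ^2) < 0 ↔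
      E > Real.sqrt ((μ / Real.sqrt (b^2 + δ^2))^2 + 1/(64*δ^2*(b^2 + δ^2)))) := by
  intro J
  have hS : (0:ℝ) < b^2 + δ^2 := by positivity
  have hs : (0:ℝ) < Real.sqrt (b^2 + δ^2) := Real.sqrt_pos.mpr hS
  have hs2 : Real.sqrt (b^2 + δ^2) ^ 2 = b^2 + δ^2 := Real.sq_sqrt hS.le
  have hμ0 : (0:ℝ) < μ := by rw [hμ]; norm_num
  have hRpos : 0 < R := by rw [hR]; positivity
  have hμR : μ < R := by
    rw [hR]
    calc μ = (μ / Real.sqrt (b^2+δ^2)) * Real.sqrt (b^2+δ^2) := by field_simp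
    _ < E * Real.sqrt (b^2+δ^2) := mul_lt_mul_of_pos_right hEℓ hs
  -- sin (θNℓ - φ) = -√(1 - (μ/R)^2)
  have hsin : Real.sin (θNℓ - φ) = -Real.sqrt (1 - (μ/R)^2) := by
    rw [hθN]
    split_ifs with h
    · have : φ - Real.arccos (μ / R) - φ = -(Real.arccos (μ/R)) := by ring
      rw [this, Real.sin_neg, Real.sin_arccos]
    · have : φ - Real.arccos (μ / R) + 2*π - φ = -(Real.arccos (μ/R)) + 2*π := by ring
      rw [this, Real.sin_add_two_pi, Real.sin_neg, Real.sin_arccos]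
  have hRsin : R * Real.sin (θNℓ - φ) = -Real.sqrt (R^2 - μ^2) := by
    rw [hsin]
    have h1 : R * Real.sqrt (1 - (μ/R)^2) = Real.sqrt (R^2 - μ^2) := by
      rw [show R^2 - μ^2 = R^2 * (1 - (μ/R)^2) by field_simp]
      rw [Real.sqrt_mul (by positivity), Real.sqrt_sq hRpos.le]
    linarith [h1]
  have hQpos : 0 < Real.sqrt (R^2 - μ^2) := Real.sqrt_pos.mpr (by nlinarith)
  have hQ2 : Real.sqrt (R^2 - μ^2) ^ 2 = R^2 - μ^2 := Real.sq_sqrt (by nlinarith)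
  have htr : Matrix.trace J = -1 := by
    simp [J, Matrix.trace_fin_two_of]
  have hdet : J.det = 2*δ*Real.sqrt (R^2 - μ^2) := by
    simp [J, Matrix.det_fin_two_of, hRsin]; ring
  have hR2 : R^2 = E^2 * (b^2 + δ^2) := by rw [hR, mul_pow, hs2]
  have hsq : (8*δ*Real.sqrt (R^2 - μ^2))^2 = 64*δ^2*(E^2*(b^2+δ^2) - μ^2) := by
    rw [mul_pow, mul_pow, hQ2, hR2]; ring
  set Y := (μ / Real.sqrt (b^2 + δ^2))^2 + 1/(64*δ^2*(b^2 + δ^2)) with hY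
  have hYeq : Y = μ^2/(b^2+δ^2) + 1/(64*δ^2*(b^2+δ^2)) := by
    rw [hY, div_pow, hs2]
  have hiff1 : 1 - 8*δ*Real.sqrt (R^2 - μ^2) > 0 ↔ E < Real.sqrt Y := by
    rw [Real.lt_sqrt hE.le, hYeq, ← aux_lt (b^2+δ^2) δ E μ hS hδ]
    rw [show (1:ℝ) - 8*δ*Real.sqrt (R^2-μ^2) > 0 ↔ 8*δ*Real.sqrt (R^2-μ^2) < 1 by
      constructor <;> intro <;> linarith]
    rw [sq_lt_iff' _ 1 (by positivity) one_pos.le, hsq]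
    norm_num
  have hiff2 : 1 - 8*δ*Real.sqrt (R^2 - μ^2) < 0 ↔ Real.sqrt Y < E := by
    rw [Real.sqrt_lt' hE, hYeq, ← aux_gt (b^2+δ^2) δ E μ hS hδ]
    rw [show (1:ℝ) - 8*δ*Real.sqrt (R^2-μ^2) < 0 ↔ 1 < 8*δ*Real.sqrt (R^2-μ^2) by
      constructor <;> intro <;> linarith]
    rw [sq_lt_iff' 1 _ one_pos.le (by positivity), hsq]
    norm_num
  exact ⟨htr, by rw [htr]; norm_num, hdet, by rw [hdet]; positivity,
    by rw [htr, hdet]; ring, hiff1, hiff2⟩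
end

section
/- Let a = 7/8, b = 4/5, μ = 7/30, δ > 0, and E > E*r(δ). Then the Jacobian J(2, θ_Nr) satisfies trace(J(2, θ_Nr)) = −1 < 0 and det(J(2, θ_Nr)) = 2δ·√(R_δ² − G(2)²) > 0, and its discriminant satisfies trace² − 4·det = 1 − 8δ·√(R_δ² − G(2)²). Moreover, 1 − 8δ·√(R_δ² − G(2)²) > 0 (folded node) if and only if E < E**r(δ) := √( (E*r(δ))² + 1/(64·δ²·(b² + δ²)) ), and 1 − 8δ·√(R_δ² − G(2)²) < 0 (folded focus) if and only if E > E**r(δ). -/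
open Real Set Matrix

/-- For `a = 7/8`, `b = 4/5`, `μ = 7/30`, `δ > 0`, `E > E*r(δ)`
(with `G(2) = 7/6`): the Jacobian `J(2, θ_Nr)` with `θ_Nr = φ + arccos(G(2)/R)`
has trace `−1 < 0`, determinant `2δ√(R² − G(2)²) > 0`, discriminant
`trace² − 4 det = 1 − 8δ√(R² − G(2)²)`, and this is positive (folded node) iff
`E < E**r(δ) = √((E*r(δ))² + 1/(64δ²(b² + δ²)))`, and negative (folded focus)
iff `E > E**r(δ)`. -/
theorem stmt_6 (a b μ δ E R φ θNr : ℝ)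
    (ha : a = 7/8) (hb : b = 4/5) (hμ : μ = 7/30)
    (hδ : 0 < δ) (hE : 0 < E)
    (hR : R = E * Real.sqrt (b^2 + δ^2))
    (hφ : φ = Real.arctan (b / δ))
    (hEr : E > (7/6) / Real.sqrt (b^2 + δ^2))
    (hθN : θNr = φ + Real.arccos ((7/6) / R)) :
    let J : Matrix (Fin 2) (Fin 2) ℝ :=
      !![-1, -(R * Real.sin (θNr - φ)); 2*δ*(2 - 1), 0]
    Matrix.trace J = -1 ∧ Matrix.trace J < 0 ∧
    J.det = 2*δ*Real.sqrt (R^2 - (7/6)^2) ∧ 0 < J.det ∧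
    (Matrix.trace J)^2 - 4 * J.det = 1 - 8*δ*Real.sqrt (R^2 - (7/6)^2) ∧
    (1 - 8*δ*Real.sqrt (R^2 - (7/6)^2) > 0 ↔
      E < Real.sqrt (((7/6) / Real.sqrt (b^2 + δ^2))^2 + 1/(64*δ^2*(b^2 + δ^2)))) ∧
    (1 - 8*δ*Real.sqrt (R^2 - (7/6)^2) < 0 ↔
      E > Real.sqrt (((7/6) / Real.sqrt (b^2 + δ^2))^2 + 1/(64*δ^2*(b^2 + δ^2)))) := by
  subst hb
  intro J
  set s : ℝ := (4/5:ℝ)^2 + δ^2 with hs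
  have hs0 : 0 < s := by positivity
  have hss : Real.sqrt s ^ 2 = s := Real.sq_sqrt hs0.le
  have hsp : 0 < Real.sqrt s := Real.sqrt_pos.mpr hs0
  have hR76 : (7/6:ℝ) < R := by
    rw [hR]
    calc (7/6:ℝ) = (7/6)/Real.sqrt s * Real.sqrt s := (div_mul_cancel₀ _ hsp.ne').symm
    _ < E * Real.sqrt s := mul_lt_mul_of_pos_right hEr hsp
  have hRpos : 0 < R := lt_trans (by norm_num) hR76
  have hR2 : R^2 = E^2 * s := by rw [hR, mul_pow, hss]
  set D := Real.sqrt (R^2 - (7/6)^2) with hDdef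
  have hD2 : D^2 = R^2 - (7/6)^2 := Real.sq_sqrt (by nlinarith)
  have hD0 : 0 < D := Real.sqrt_pos.mpr (by nlinarith)
  have hsin : R * Real.sin (θNr - φ) = D := by
    rw [hθN]
    simp only [add_sub_cancel_left]
    rw [Real.sin_arccos, hDdef,
      show R^2 - (7/6)^2 = R^2 * (1 - ((7/6)/R)^2) by field_simp,
      Real.sqrt_mul (sq_nonneg R), Real.sqrt_sq hRpos.le]
  have htr : Matrix.trace J = -1 := by simp [J, Matrix.trace_fin_two_of]
  have hdet : J.det = 2*δ*D := by
    rw [show J.det = 2*δ*(R*Real.sin (θNr-φ)) by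
      simp [J, Matrix.det_fin_two_of]; ring, hsin]
  have h8δ : (0:ℝ) < 8*δ := by positivity
  have hc : (0:ℝ) < 1/(8*δ) := by positivity
  have h76 : ((7:ℝ)/6)^2 = 49/36 := by norm_num
  have hX : ((7/6)/Real.sqrt s)^2 + 1/(64*δ^2*s) = (49/36 + (1/(8*δ))^2)/s := by
    rw [div_pow, hss]; field_simp; ring
  clear_value s D
  refine ⟨htr, by rw [htr]; norm_num, hdet, by rw [hdet]; positivity, ?_, ?_, ?_⟩
  · rw [htr, hdet]; ring
  · rw [hX, Real.lt_sqrt hE.le, lt_div_iff₀ hs0]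
    constructor
    · intro h
      have hd : D < 1/(8*δ) := by rw [lt_div_iff₀ h8δ]; linarith
      have h2 : D^2 < (1/(8*δ))^2 := by rw [sq, sq]; exact mul_self_lt_mul_self hD0.le hd
      linarith [hD2, hR2, h76]
    · intro h
      have h2 : D^2 < (1/(8*δ))^2 := by linarith [hD2, hR2, h76]
      have hd : D < 1/(8*δ) := lt_of_pow_lt_pow_left₀ 2 hc.le h2
      rw [lt_div_iff₀ h8δ] at hd
      linarith
  · rw [hX, gt_iff_lt, show (Real.sqrt ((49/36 + (1/(8*δ))^2)/s) < E) ↔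
        (49/36 + (1/(8*δ))^2)/s < E^2 from Real.sqrt_lt' hE, div_lt_iff₀ hs0]
    constructor
    · intro h
      have hd : 1/(8*δ) < D := by rw [div_lt_iff₀ h8δ]; linarith
      have h2 : (1/(8*δ))^2 < D^2 := by rw [sq, sq]; exact mul_self_lt_mul_self hc.le hd
      linarith [hD2, hR2, h76]
    · intro h
      have h2 : (1/(8*δ))^2 < D^2 := by linarith [hD2, hR2, h76]
      have hd : 1/(8*δ) < D := lt_of_pow_lt_pow_left₀ 2 hD0.le h2
      rw [div_lt_iff₀ h8δ] at hd
      linarith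
end
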